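/- Let A, B ∈ SL₃(ℂ) be matrices with tr(ABA⁻¹B⁻¹) ≠ tr(BAB⁻¹A⁻¹). Then the subgroup generated by A and B acts irreducibly on ℂ³: there is no ℂ-linear subspace W ⊆ ℂ³ with 0 < dim W < 3 such that A·W ⊆ W and B·W ⊆ W. -/

import Mathlib

open Matrix

lemma keylem (M : Matrix (Fin 3) (Fin 3) ℂ) (hdet : M.det = 1)
    (h0 : (M - 1).det = 0) : M.trace = M⁻¹.trace := by
  rw [Matrix.inv_def, hdet]
  simp only [Ring.inverse_one, one_smul]
  rw [Matrix.det_fin_three] at hdet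
  rw [Matrix.det_fin_three] at h0
  simp only [Matrix.sub_apply, Matrix.one_apply, Fin.isValue, Fin.reduceEq, if_true, if_false,
    reduceIte, sub_zero] at h0
  rw [Matrix.trace_fin_three, Matrix.trace_fin_three, Matrix.adjugate_fin_three]
  norm_num
  simp only [Matrix.cons_val, Fin.isValue]
  linear_combination h0 - hdet

lemma coe_sl_inv (g : Matrix.SpecialLinearGroup (Fin 3) ℂ) :
    (↑(g⁻¹) : Matrix (Fin 3) (Fin 3) ℂ) = (↑g : Matrix (Fin 3) (Fin 3) ℂ)⁻¹ := by
  rw [Matrix.SpecialLinearGroup.coe_inv, Matrix.inv_def, Matrix.SpecialLinearGroup.det_coe,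
    Ring.inverse_one, one_smul]

lemma fixed_det (C : Matrix (Fin 3) (Fin 3) ℂ) (v : Fin 3 → ℂ) (hv : v ≠ 0)
    (hC : C *ᵥ v = v) : (C - 1).det = 0 := by
  by_contra h0
  have hu : IsUnit (C - 1).det := isUnit_iff_ne_zero.mpr h0
  have h1 : (C - 1) *ᵥ v = 0 := by
    rw [Matrix.sub_mulVec, hC, Matrix.one_mulVec, sub_self]
  have : v = 0 := by
    have := congrArg (fun w => (C - 1)⁻¹ *ᵥ w) h1
    simpa [Matrix.mulVec_mulVec, Matrix.nonsing_inv_mul _ hu] using this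
  exact hv this

lemma fixed_det_dual (C : Matrix (Fin 3) (Fin 3) ℂ) (φ : Module.Dual ℂ (Fin 3 → ℂ))
    (hφ : φ ≠ 0) (hC : φ ∘ₗ C.mulVecLin = φ) : (C - 1).det = 0 := by
  by_contra h0
  have hu : IsUnit (C - 1).det := isUnit_iff_ne_zero.mpr h0
  have h1 : φ ∘ₗ (C - 1).mulVecLin = 0 := by
    apply LinearMap.ext; intro v
    have h2 := LinearMap.congr_fun hC v
    simp only [LinearMap.comp_apply, Matrix.mulVecLin_apply] at h2 ⊢
    rw [Matrix.sub_mulVec, Matrix.one_mulVec, map_sub, h2, sub_self]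
    rfl
  have : φ = 0 := by
    have h2 : φ ∘ₗ ((C - 1).mulVecLin ∘ₗ (C - 1)⁻¹.mulVecLin) = 0 := by
      rw [← LinearMap.comp_assoc, h1, LinearMap.zero_comp]
    rwa [← Matrix.mulVecLin_mul, Matrix.mul_nonsing_inv _ hu, Matrix.mulVecLin_one,
      LinearMap.comp_id] at h2
  exact hφ this

theorem stmt_1 (A B : Matrix.SpecialLinearGroup (Fin 3) ℂ)
    (h : Matrix.trace ((↑(A * B * A⁻¹ * B⁻¹) : Matrix (Fin 3) (Fin 3) ℂ)) ≠
         Matrix.trace ((↑(B * A * B⁻¹ * A⁻¹) : Matrix (Fin 3) (Fin 3) ℂ))) :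
    ¬ ∃ W : Submodule ℂ (Fin 3 → ℂ),
        0 < Module.finrank ℂ W ∧ Module.finrank ℂ W < 3 ∧
        (∀ v ∈ W, (↑A : Matrix (Fin 3) (Fin 3) ℂ).mulVec v ∈ W) ∧
        (∀ v ∈ W, (↑B : Matrix (Fin 3) (Fin 3) ℂ).mulVec v ∈ W) := by
  rintro ⟨W, h1, h2, hA, hB⟩
  set MA : Matrix (Fin 3) (Fin 3) ℂ := ↑A with hMA
  set MB : Matrix (Fin 3) (Fin 3) ℂ := ↑B with hMB
  set MA' : Matrix (Fin 3) (Fin 3) ℂ := ↑(A⁻¹) with hMA'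
  set MB' : Matrix (Fin 3) (Fin 3) ℂ := ↑(B⁻¹) with hMB'
  set C : Matrix (Fin 3) (Fin 3) ℂ := ↑(A * B * A⁻¹ * B⁻¹) with hCdef
  have hAinv : MA' * MA = 1 := by
    rw [hMA, hMA', ← Matrix.SpecialLinearGroup.coe_mul, inv_mul_cancel,
      Matrix.SpecialLinearGroup.coe_one]
  have hBinv : MB' * MB = 1 := by
    rw [hMB, hMB', ← Matrix.SpecialLinearGroup.coe_mul, inv_mul_cancel,
      Matrix.SpecialLinearGroup.coe_one]
  have hAinv' : MA * MA' = 1 := by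
    rw [hMA, hMA', ← Matrix.SpecialLinearGroup.coe_mul, mul_inv_cancel,
      Matrix.SpecialLinearGroup.coe_one]
  have hBinv' : MB * MB' = 1 := by
    rw [hMB, hMB', ← Matrix.SpecialLinearGroup.coe_mul, mul_inv_cancel,
      Matrix.SpecialLinearGroup.coe_one]
  have hCmat : C = MA * MB * MA' * MB' := by
    rw [hCdef, hMA, hMB, hMA', hMB', Matrix.SpecialLinearGroup.coe_mul,
      Matrix.SpecialLinearGroup.coe_mul, Matrix.SpecialLinearGroup.coe_mul]
  have key : (C - 1).det = 0 := by
    have hr : Module.finrank ℂ W = 1 ∨ Module.finrank ℂ W = 2 := by omega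
    rcases hr with hr | hr
    · -- dimension 1: common eigenvector
      obtain ⟨v, hv0, hgen⟩ := finrank_eq_one_iff'.mp hr
      set v₀ : Fin 3 → ℂ := (v : Fin 3 → ℂ) with hv₀def
      have hv₀ : v₀ ≠ 0 := fun hh => hv0 (Subtype.ext hh)
      obtain ⟨a, ha⟩ := hgen ⟨MA *ᵥ v₀, hA v₀ v.2⟩
      have haa : MA *ᵥ v₀ = a • v₀ := by
        have := congrArg (Subtype.val) ha; exact this.symm
      obtain ⟨b, hb⟩ := hgen ⟨MB *ᵥ v₀, hB v₀ v.2⟩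
      have hbb : MB *ᵥ v₀ = b • v₀ := by
        have := congrArg (Subtype.val) hb; exact this.symm
      have hcancelA : MA' *ᵥ (MA *ᵥ v₀) = v₀ := by
        rw [Matrix.mulVec_mulVec, hAinv, Matrix.one_mulVec]
      have hcancelB : MB' *ᵥ (MB *ᵥ v₀) = v₀ := by
        rw [Matrix.mulVec_mulVec, hBinv, Matrix.one_mulVec]
      have ha0 : a ≠ 0 := by
        intro h0
        rw [h0, zero_smul] at haa
        rw [haa, Matrix.mulVec_zero] at hcancelA
        exact hv₀ hcancelA.symm
      have hb0 : b ≠ 0 := by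
        intro h0
        rw [h0, zero_smul] at hbb
        rw [hbb, Matrix.mulVec_zero] at hcancelB
        exact hv₀ hcancelB.symm
      have haainv : MA' *ᵥ v₀ = a⁻¹ • v₀ := by
        have h3 : a • (MA' *ᵥ v₀) = v₀ := by
          rw [← Matrix.mulVec_smul, ← haa, hcancelA]
        calc MA' *ᵥ v₀ = a⁻¹ • (a • (MA' *ᵥ v₀)) := by
              rw [smul_smul, inv_mul_cancel₀ ha0, one_smul]
          _ = a⁻¹ • v₀ := by rw [h3]
      have hbbinv : MB' *ᵥ v₀ = b⁻¹ • v₀ := by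
        have h3 : b • (MB' *ᵥ v₀) = v₀ := by
          rw [← Matrix.mulVec_smul, ← hbb, hcancelB]
        calc MB' *ᵥ v₀ = b⁻¹ • (b • (MB' *ᵥ v₀)) := by
              rw [smul_smul, inv_mul_cancel₀ hb0, one_smul]
          _ = b⁻¹ • v₀ := by rw [h3]
      have hfix : C *ᵥ v₀ = v₀ := by
        rw [hCmat, ← Matrix.mulVec_mulVec, ← Matrix.mulVec_mulVec, ← Matrix.mulVec_mulVec,
          hbbinv, Matrix.mulVec_smul, haainv, smul_smul, Matrix.mulVec_smul, hbb, smul_smul,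
          Matrix.mulVec_smul, haa, smul_smul]
        rw [show b⁻¹ * a⁻¹ * b * a = 1 by field_simp, one_smul]
      exact fixed_det C v₀ hv₀ hfix
    · -- dimension 2: use the dual annihilator
      have hann : Module.finrank ℂ W.dualAnnihilator = 1 := by
        have e := LinearEquiv.finrank_eq (Subspace.quotEquivAnnihilator W)
        have h3 := Submodule.finrank_quotient_add_finrank W
        rw [Module.finrank_fin_fun] at h3
        omega
      obtain ⟨ψ, hψ0, hgen⟩ := finrank_eq_one_iff'.mp hann
      set φ : Module.Dual ℂ (Fin 3 → ℂ) := (ψ : Module.Dual ℂ (Fin 3 → ℂ)) with hφdef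
      have hφ0 : φ ≠ 0 := fun hh => hψ0 (Subtype.ext hh)
      have hmemA : φ ∘ₗ MA.mulVecLin ∈ W.dualAnnihilator := by
        rw [Submodule.mem_dualAnnihilator]
        intro w hw
        simp only [LinearMap.comp_apply, Matrix.mulVecLin_apply]
        exact (Submodule.mem_dualAnnihilator φ).mp ψ.2 _ (hA w hw)
      have hmemB : φ ∘ₗ MB.mulVecLin ∈ W.dualAnnihilator := by
        rw [Submodule.mem_dualAnnihilator]
        intro w hw
        simp only [LinearMap.comp_apply, Matrix.mulVecLin_apply]
        exact (Submodule.mem_dualAnnihilator φ).mp ψ.2 _ (hB w hw)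
      obtain ⟨a, ha⟩ := hgen ⟨_, hmemA⟩
      have haa : φ ∘ₗ MA.mulVecLin = a • φ := by
        have := congrArg (Subtype.val) ha; exact this.symm
      obtain ⟨b, hb⟩ := hgen ⟨_, hmemB⟩
      have hbb : φ ∘ₗ MB.mulVecLin = b • φ := by
        have := congrArg (Subtype.val) hb; exact this.symm
      have hcancelA : (φ ∘ₗ MA.mulVecLin) ∘ₗ MA'.mulVecLin = φ := by
        rw [LinearMap.comp_assoc, ← Matrix.mulVecLin_mul, hAinv', Matrix.mulVecLin_one,
          LinearMap.comp_id]
      have hcancelB : (φ ∘ₗ MB.mulVecLin) ∘ₗ MB'.mulVecLin = φ := by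
        rw [LinearMap.comp_assoc, ← Matrix.mulVecLin_mul, hBinv', Matrix.mulVecLin_one,
          LinearMap.comp_id]
      have ha0 : a ≠ 0 := by
        intro h0
        rw [h0, zero_smul] at haa
        rw [haa, LinearMap.zero_comp] at hcancelA
        exact hφ0 hcancelA.symm
      have hb0 : b ≠ 0 := by
        intro h0
        rw [h0, zero_smul] at hbb
        rw [hbb, LinearMap.zero_comp] at hcancelB
        exact hφ0 hcancelB.symm
      have haainv : φ ∘ₗ MA'.mulVecLin = a⁻¹ • φ := by
        have h3 : a • (φ ∘ₗ MA'.mulVecLin) = φ := by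
          rw [← LinearMap.smul_comp, ← haa, hcancelA]
        calc φ ∘ₗ MA'.mulVecLin = a⁻¹ • (a • (φ ∘ₗ MA'.mulVecLin)) := by
              rw [smul_smul, inv_mul_cancel₀ ha0, one_smul]
          _ = a⁻¹ • φ := by rw [h3]
      have hbbinv : φ ∘ₗ MB'.mulVecLin = b⁻¹ • φ := by
        have h3 : b • (φ ∘ₗ MB'.mulVecLin) = φ := by
          rw [← LinearMap.smul_comp, ← hbb, hcancelB]
        calc φ ∘ₗ MB'.mulVecLin = b⁻¹ • (b • (φ ∘ₗ MB'.mulVecLin)) := by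
              rw [smul_smul, inv_mul_cancel₀ hb0, one_smul]
          _ = b⁻¹ • φ := by rw [h3]
      have hfix : φ ∘ₗ C.mulVecLin = φ := by
        rw [hCmat, Matrix.mulVecLin_mul, Matrix.mulVecLin_mul, Matrix.mulVecLin_mul,
          ← LinearMap.comp_assoc, ← LinearMap.comp_assoc, ← LinearMap.comp_assoc,
          haa, LinearMap.smul_comp, LinearMap.smul_comp, LinearMap.smul_comp,
          hbb, LinearMap.smul_comp, LinearMap.smul_comp, haainv, LinearMap.smul_comp,
          hbbinv]
        rw [smul_smul, smul_smul, smul_smul]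
        rw [show a * b * a⁻¹ * b⁻¹ = 1 by field_simp, one_smul]
      exact fixed_det_dual C φ hφ0 hfix
  have hdetC : C.det = 1 := Matrix.SpecialLinearGroup.det_coe _
  have htr := keylem C hdetC key
  apply h
  have hinv : B * A * B⁻¹ * A⁻¹ = (A * B * A⁻¹ * B⁻¹)⁻¹ := by group
  rw [hinv, coe_sl_inv]
  exact htr
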